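/- Fix x ∈ ℝ^N, an N×N symmetric matrix H with H ⪰ c₂ I for some c₂ > 0, a differentiable f : ℝ^N → ℝ, and a convex Ψ : ℝ^N → ℝ. Define Q(p) = ⟨∇f(x), p⟩ + (1/2)⟨p, H p⟩ + Ψ(x + p) − Ψ(x), with minimum value Q* (so Q(0) = 0 and Q* ≤ 0). Let η ∈ [0,1) and S ≥ 1 an integer, and suppose p ∈ ℝ^N satisfies the inexactness condition Q(p) − Q* ≤ η^S (Q(0) − Q*). Then Δ := ⟨∇f(x), p⟩ + Ψ(x + p) − Ψ(x) satisfies Δ ≤ − c₂ ‖p‖² / (1 + η^{S/2}). -/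

import Mathlib

open scoped RealInnerProductSpace

private lemma aux_mu (D a μ : ℝ) (hμ : 0 < μ)
    (h : (D + a) * (1 + μ) ^ 2 ≤ D * (1 + μ) + a) :
    D * (1 + μ) + a * (μ + 2) ≤ 0 := by nlinarith

private lemma aux_mu2 (D a μ δ : ℝ) (hμ : 0 < μ) (hδ : 0 < δ)
    (hμδ : μ * (a + 1) ≤ δ)
    (h5 : D * (1 + μ) + a * (μ + 2) ≤ 0) : D ≤ -(2 * a) + δ := by
  nlinarith

private lemma aux_theta (D a θ : ℝ) (hθ : 0 < θ)
    (h : (D + a) * (1 + θ) ^ 2 ≤ (1 - θ ^ 2) * (D * (1 + θ) + a)) :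
    D * (1 + θ) + 2 * a ≤ 0 := by nlinarith

/-- first claim of Lemma 2 of the paper: if the approximate
subproblem solution `p` satisfies `Q(p) − Q* ≤ η^S (Q(0) − Q*)` and `H ⪰ c₂ I`, then
`Δ = ⟨∇f(x), p⟩ + Ψ(x + p) − Ψ(x)` satisfies `Δ ≤ −c₂‖p‖²/(1 + η^{S/2})`. -/
theorem inexact_direction_Delta_bound {N : ℕ} (c₂ η : ℝ) (S : ℕ)
    (hc₂ : 0 < c₂) (hη0 : 0 ≤ η) (hη1 : η < 1) (hS : 1 ≤ S)
    (H : EuclideanSpace ℝ (Fin N) →L[ℝ] EuclideanSpace ℝ (Fin N))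
    (hHsymm : ∀ v w, ⟪H v, w⟫ = ⟪v, H w⟫)
    (hHlb : ∀ v, c₂ * ‖v‖ ^ 2 ≤ ⟪v, H v⟫)
    (f : EuclideanSpace ℝ (Fin N) → ℝ) (hf : Differentiable ℝ f)
    (Ψ : EuclideanSpace ℝ (Fin N) → ℝ) (hΨ : ConvexOn ℝ Set.univ Ψ)
    (x : EuclideanSpace ℝ (Fin N))
    (Q : EuclideanSpace ℝ (Fin N) → ℝ)
    (hQ : ∀ q, Q q = ⟪gradient f x, q⟫ + (1 / 2) * ⟪q, H q⟫ + Ψ (x + q) - Ψ x)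
    (Qstar : ℝ) (hatt : ∃ qmin, Q qmin = Qstar) (hlb : ∀ q, Qstar ≤ Q q)
    (p : EuclideanSpace ℝ (Fin N))
    (hinexact : Q p - Qstar ≤ η ^ S * (Q 0 - Qstar)) :
    ⟪gradient f x, p⟫ + Ψ (x + p) - Ψ x
      ≤ -(c₂ * ‖p‖ ^ 2) / (1 + Real.sqrt (η ^ S)) := by
  set D : ℝ := ⟪gradient f x, p⟫ + Ψ (x + p) - Ψ x with hD
  set a : ℝ := ⟪p, H p⟫ / 2 with ha
  have hε0 : (0:ℝ) ≤ η ^ S := pow_nonneg hη0 S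
  have hε1 : η ^ S < 1 := pow_lt_one₀ hη0 hη1 (by omega)
  have hQ0 : Q 0 = 0 := by simp [hQ]
  have hQp : Q p = D + a := by rw [hQ]; ring
  have hQs0 : Qstar ≤ 0 := hQ0 ▸ hlb 0
  have ha0 : 0 ≤ a := by
    have h1 := hHlb p
    have h2 : (0:ℝ) ≤ c₂ * ‖p‖ ^ 2 := by positivity
    rw [ha]; linarith
  have hca : c₂ * ‖p‖ ^ 2 ≤ 2 * a := by have := hHlb p; rw [ha]; linarith
  -- the quadratic upper bound along the segment
  have hQt : ∀ t : ℝ, 0 ≤ t → t ≤ 1 → Q (t • p) ≤ t * D + t ^ 2 * a := by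
    intro t ht0 ht1
    have hx : (1 - t) • x + t • (x + p) = x + t • p := by
      rw [smul_add, sub_smul, one_smul]; abel
    have hconv : Ψ (x + t • p) ≤ (1 - t) * Ψ x + t * Ψ (x + p) := by
      have := hΨ.2 (Set.mem_univ x) (Set.mem_univ (x + p))
        (by linarith : (0:ℝ) ≤ 1 - t) ht0 (by ring)
      rwa [hx] at this
    have h1 : ⟪gradient f x, t • p⟫ = t * ⟪gradient f x, p⟫ :=
      real_inner_smul_right _ _ _
    have h2 : ⟪t • p, H (t • p)⟫ = t ^ 2 * ⟪p, H p⟫ := by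
      rw [map_smul, real_inner_smul_left, real_inner_smul_right]; ring
    rw [hQ, h1, h2, hD, ha]
    nlinarith [hconv]
  -- the key inequality
  have key : ∀ t : ℝ, 0 ≤ t → t ≤ 1 →
      D + a ≤ (1 - η ^ S) * (t * D + t ^ 2 * a) := by
    intro t ht0 ht1
    have h1 : Q p ≤ Qstar - η ^ S * Qstar := by
      rw [hQ0] at hinexact; nlinarith
    have h2 : (1 - η ^ S) * Qstar ≤ (1 - η ^ S) * Q (t • p) :=
      mul_le_mul_of_nonneg_left (hlb _) (by linarith)
    have h3 : (1 - η ^ S) * Q (t • p) ≤ (1 - η ^ S) * (t * D + t ^ 2 * a) :=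
      mul_le_mul_of_nonneg_left (hQt t ht0 ht1) (by linarith)
    nlinarith [hQp]
  set θ : ℝ := Real.sqrt (η ^ S) with hθ
  have hθ0 : 0 ≤ θ := Real.sqrt_nonneg _
  have hθsq : θ ^ 2 = η ^ S := Real.sq_sqrt hε0
  have h1θ : (0:ℝ) < 1 + θ := by linarith
  rw [le_div_iff₀ h1θ]
  rcases eq_or_lt_of_le hθ0 with hθz | hθpos
  · -- θ = 0 : exact solve, need D ≤ -c₂‖p‖²
    have hε : η ^ S = 0 := by rw [← hθsq, ← hθz]; ring
    have hD2a : D ≤ -(2 * a) := by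
      apply le_of_forall_pos_le_add
      intro δ hδ
      set μ : ℝ := min 1 (δ / (a + 1)) with hμ
      have hμ0 : 0 < μ := lt_min one_pos (div_pos hδ (by linarith))
      have hμ1 : μ ≤ 1 := min_le_left _ _
      have hμδ : μ * (a + 1) ≤ δ := by
        have h := min_le_right 1 (δ / (a + 1))
        calc μ * (a + 1) ≤ (δ / (a + 1)) * (a + 1) := by
              apply mul_le_mul_of_nonneg_right h (by linarith)
          _ = δ := by field_simp
      have h1μ : (0:ℝ) < 1 + μ := by linarith
      have hkey := key (1 / (1 + μ)) (by positivity)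
        (by rw [div_le_one h1μ]; linarith)
      rw [hε] at hkey
      have hkey2 : (D + a) * (1 + μ) ^ 2 ≤ D * (1 + μ) + a := by
        have := mul_le_mul_of_nonneg_right hkey (le_of_lt (by positivity : (0:ℝ) < (1 + μ) ^ 2))
        calc (D + a) * (1 + μ) ^ 2
            ≤ (1 - 0) * (1 / (1 + μ) * D + (1 / (1 + μ)) ^ 2 * a) * (1 + μ) ^ 2 := this
          _ = D * (1 + μ) + a := by field_simp; ring
      exact aux_mu2 D a μ δ hμ0 hδ hμδ (aux_mu D a μ hμ0 hkey2)
    nlinarith [hD2a, hca, hθz]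
  · -- θ > 0
    have hkey := key (1 / (1 + θ)) (by positivity)
      (by rw [div_le_one h1θ]; linarith)
    have hkey2 : (D + a) * (1 + θ) ^ 2 ≤ (1 - θ ^ 2) * (D * (1 + θ) + a) := by
      have := mul_le_mul_of_nonneg_right hkey (le_of_lt (by positivity : (0:ℝ) < (1 + θ) ^ 2))
      calc (D + a) * (1 + θ) ^ 2
          ≤ (1 - η ^ S) * (1 / (1 + θ) * D + (1 / (1 + θ)) ^ 2 * a) * (1 + θ) ^ 2 := this
        _ = (1 - θ ^ 2) * (D * (1 + θ) + a) := by rw [← hθsq]; field_simp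
    linarith [hca, aux_theta D a θ hθpos hkey2]
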